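/- For all real numbers χ and φ, the complex numbers f₁ = e^{−φ/2}(−iχ + e^{φ} + 1)/(2√2) and f₂ = e^{−φ/2}(−iχ + e^{φ} − 1)/(2√2) satisfy |f₁|² − |f₂|² = 1/2; consequently 8|f₂|² − 12|f₁|² + 3 = 2|f₂|² − 6|f₁|², i.e. the N=8 scalar potential of the SU(4)_S-invariant subsector coincides with the N=4 scalar potential. -/

import Mathlib

/-- Fermion-shift building blocks of the SU(4)_S-invariant subsector. -/
noncomputable def f₁ (χ φ : ℝ) : ℂ :=
  (Real.exp (-φ / 2) : ℂ) * (-(Complex.I * (χ : ℂ)) + (Real.exp φ : ℂ) + 1) /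
    (2 * (Real.sqrt 2 : ℂ))

noncomputable def f₂ (χ φ : ℝ) : ℂ :=
  (Real.exp (-φ / 2) : ℂ) * (-(Complex.I * (χ : ℂ)) + (Real.exp φ : ℂ) - 1) /
    (2 * (Real.sqrt 2 : ℂ))

/-- `|f₁|² − |f₂|² = 1/2`, hence the `N = 8` scalar potential
`8|f₂|² − 12|f₁|² + 3` of the SU(4)_S-invariant subsector coincides with the
`N = 4` potential `2|f₂|² − 6|f₁|²`. -/
theorem potential_N8_eq_N4 (χ φ : ℝ) :
    ‖f₁ χ φ‖ ^ 2 - ‖f₂ χ φ‖ ^ 2 = 1 / 2 ∧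
    8 * ‖f₂ χ φ‖ ^ 2 - 12 * ‖f₁ χ φ‖ ^ 2 + 3 =
      2 * ‖f₂ χ φ‖ ^ 2 - 6 * ‖f₁ χ φ‖ ^ 2 := by
  have key : ‖f₁ χ φ‖ ^ 2 - ‖f₂ χ φ‖ ^ 2 = 1 / 2 := by
    have hs : (Real.sqrt 2 : ℝ) ≠ 0 := by positivity
    have e1 : f₁ χ φ = Complex.I * ((-(Real.exp (-φ/2) * χ) / (2*Real.sqrt 2) : ℝ) : ℂ)
        + ((Real.exp (-φ/2) * (Real.exp φ + 1) / (2*Real.sqrt 2) : ℝ) : ℂ) := by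
      unfold f₁
      push_cast
      field_simp
      ring
    have e2 : f₂ χ φ = Complex.I * ((-(Real.exp (-φ/2) * χ) / (2*Real.sqrt 2) : ℝ) : ℂ)
        + ((Real.exp (-φ/2) * (Real.exp φ - 1) / (2*Real.sqrt 2) : ℝ) : ℂ) := by
      unfold f₂
      push_cast
      field_simp
      ring
    rw [e1, e2]
    simp only [Complex.sq_norm, Complex.normSq_apply, Complex.add_re, Complex.add_im,
      Complex.mul_re, Complex.mul_im, Complex.I_re, Complex.I_im, Complex.ofReal_re,
      Complex.ofReal_im]
    have h2 : Real.sqrt 2 ^ 2 = 2 := Real.sq_sqrt (by norm_num)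
    have he : Real.exp (-φ/2) ^ 2 * Real.exp φ = 1 := by
      rw [sq, ← Real.exp_add, ← Real.exp_add]; norm_num
    field_simp
    nlinarith [he, h2, show Real.exp (-(φ / 2)) ^ 2 * Real.exp φ = 1 by rw [← neg_div]; exact he]
  exact ⟨key, by linarith⟩
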